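/- Let N be a positive even integer and b an integer with 0 ≤ b < N/2. Let c := gcd(N/2, b) and let m₀, n₀ ∈ ℤ be such that (N/2)m₀ + b n₀ = c. Define the unitary operator U on ℓ²(ℤ) by (Uf)(k) = f(k) e^{πi n₀ k² /(cN)}. Then for every g ∈ ℓ²(ℤ), all m,n ∈ ℤ and all l ∈ ℤ: g_{m(N/2)+nb, n/N}(l) = C(m,n) · U((U⁻¹g)_{m(N/2)+nb, −m n₀/(2c) − n b n₀/(cN) + n/N})(l), where C(m,n) = e^{πi (n₀/(cN)) (m(N/2)+nb)²}. -/

import Mathlib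

open MeasureTheory

private lemma exp_aux (E C B D A G : ℂ)
    (h : E = C + B + D + A) :
    Complex.exp E * G
      = Complex.exp C * (Complex.exp B * (G * Complex.exp D) * Complex.exp A) := by
  rw [h, Complex.exp_add, Complex.exp_add, Complex.exp_add]; ring

/-- Time-frequency shift on `ℓ²(ℤ)`: `g_{x,ω}(l) = e^{2πilω} g(l - x)`. -/
noncomputable def shiftZ (g : ℤ → ℂ) (x : ℤ) (ω : ℝ) : ℤ → ℂ :=
  fun l => Complex.exp (2 * Real.pi * Complex.I * (l : ℂ) * (ω : ℂ)) * g (l - x)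

/-- The chirp (metaplectic) operator `(Uf)(k) = f(k) e^{πi n₀ k² / (cN)}` on `ℓ²(ℤ)`. -/
noncomputable def UZop (n₀ : ℤ) (c N : ℕ) (f : ℤ → ℂ) : ℤ → ℂ :=
  fun k => f k * Complex.exp (Real.pi * Complex.I * (n₀ : ℂ) * (k : ℂ) ^ 2 / ((c : ℂ) * (N : ℂ)))

/-- The inverse chirp operator `(U⁻¹f)(k) = f(k) e^{-πi n₀ k² / (cN)}`. -/
noncomputable def UZopInv (n₀ : ℤ) (c N : ℕ) (f : ℤ → ℂ) : ℤ → ℂ :=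
  fun k => f k * Complex.exp (-(Real.pi * Complex.I * (n₀ : ℂ) * (k : ℂ) ^ 2 / ((c : ℂ) * (N : ℂ))))

/-- Metaplectic covariance on `ℓ²(ℤ)`: with `c = gcd(N/2, b)`, `(N/2)m₀ + bn₀ = c` and
`(Uf)(k) = f(k)e^{πin₀k²/(cN)}`, for every `g ∈ ℓ²(ℤ)`:
`g_{m(N/2)+nb, n/N} = C(m,n) · U((U⁻¹g)_{m(N/2)+nb, -mn₀/(2c) - nbn₀/(cN) + n/N})`
where `C(m,n) = e^{πi(n₀/(cN))(m(N/2)+nb)²}`. -/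
theorem stmt_8 (N b : ℕ) (hN : 0 < N) (hNe : Even N) (hb : b < N / 2)
    (m₀ n₀ : ℤ)
    (hmn : ((N / 2 : ℕ) : ℤ) * m₀ + (b : ℤ) * n₀ = (Nat.gcd (N / 2) b : ℤ))
    (g : ℤ → ℂ) (hg : Memℓp g 2) (m n l : ℤ) :
    shiftZ g (m * ((N / 2 : ℕ) : ℤ) + n * (b : ℤ)) ((n : ℝ) / (N : ℝ)) l
      = Complex.exp (Real.pi * Complex.I * (n₀ : ℂ) / ((Nat.gcd (N / 2) b : ℂ) * (N : ℂ)) *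
            ((m * ((N / 2 : ℕ) : ℤ) + n * (b : ℤ) : ℤ) : ℂ) ^ 2) *
        UZop n₀ (Nat.gcd (N / 2) b) N
          (shiftZ (UZopInv n₀ (Nat.gcd (N / 2) b) N g)
            (m * ((N / 2 : ℕ) : ℤ) + n * (b : ℤ))
            (-(m : ℝ) * (n₀ : ℝ) / (2 * (Nat.gcd (N / 2) b : ℝ))
              - (n : ℝ) * (b : ℝ) * (n₀ : ℝ) / ((Nat.gcd (N / 2) b : ℝ) * (N : ℝ))
              + (n : ℝ) / (N : ℝ))) l := by
  obtain ⟨M, rfl⟩ : ∃ M, N = 2 * M := ⟨N / 2, by have := hNe.two_dvd; omega⟩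
  simp only [Nat.mul_div_cancel_left _ two_pos] at hb hmn ⊢
  have hc : ((Nat.gcd M b : ℕ) : ℂ) ≠ 0 := by
    have : 0 < Nat.gcd M b := Nat.gcd_pos_of_pos_left _ (by omega)
    exact_mod_cast this.ne'
  have hM : (M : ℂ) ≠ 0 := by
    have : 0 < M := by omega
    exact_mod_cast this.ne'
  simp only [shiftZ, UZop, UZopInv]
  refine exp_aux _ _ _ _ _ _ ?_
  push_cast
  have e : ((M.gcd b : ℕ) : ℂ) ^ 2 * (M : ℂ) ^ 2 * (((M.gcd b : ℕ) : ℂ))⁻¹ ^ 2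
      * ((M : ℂ))⁻¹ ^ 2 = 1 := by
    rw [← mul_pow, ← mul_pow, ← mul_pow, show ((M.gcd b : ℕ) : ℂ) * (M:ℂ) * (((M.gcd b : ℕ) : ℂ))⁻¹ * ((M:ℂ))⁻¹ = 1 from by
        field_simp, one_pow]
  field_simp
  ring
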